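/- Let F₁ = ⋃_{i∈D₁} C_{1i} and F₂ = ⋃_{j∈D₂} C_{2j}, where D₁, D₂ are finite nonempty index sets and each C_{1i}, C_{2j} ⊆ ℝⁿ is a compact convex set. Set T_L = clconv(F₁ ∩ F₂) and T_R = clconv(F₁) ∩ clconv(F₂). Then T_L = T_R if and only if every extreme point of T_R is an extreme point of C_{1p} ∩ C_{2q} for some pair (p,q) ∈ D₁ × D₂. -/

import Mathlib

open Set

lemma pad_sum {M ι : Type*} [AddCommMonoid M] [Fintype ι] {c m : ℕ}
    (e : ι ≃ Fin c) (hcm : c ≤ m) (G : ι → M) :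
    ∑ j : Fin m, (if h : (j : ℕ) < c then G (e.symm ⟨(j : ℕ), h⟩) else 0)
      = ∑ i, G i := by
  have h1 : ∑ j : Fin m, (if h : (j : ℕ) < c then G (e.symm ⟨(j : ℕ), h⟩) else 0)
      = ∑ k ∈ Finset.range m, (if h : k < c then G (e.symm ⟨k, h⟩) else 0) :=
    Fin.sum_univ_eq_sum_range (fun k => if h : k < c then G (e.symm ⟨k, h⟩) else 0) m
  rw [h1, ← Finset.sum_subset (Finset.range_subset_range.2 hcm)
    (fun k _ hk => dif_neg (by simpa using hk))]
  rw [← Fin.sum_univ_eq_sum_range (fun k => if h : k < c then G (e.symm ⟨k, h⟩) else 0) c]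
  rw [← Equiv.sum_comp e.symm G]
  exact Finset.sum_congr rfl fun j _ => by rw [dif_pos j.2]

lemma isCompact_convexHull_of_isCompact {n : ℕ} {s : Set (Fin n → ℝ)}
    (hs : IsCompact s) : IsCompact (convexHull ℝ s) := by
  classical
  set m := n + 1 with hm
  set φ : (Fin m → ℝ) × (Fin m → (Fin n → ℝ)) → (Fin n → ℝ) :=
    fun p => ∑ i, p.1 i • p.2 i with hφ
  have hcont : Continuous φ :=
    continuous_finset_sum _ fun i _ =>
      ((continuous_apply i).comp continuous_fst).smul
        ((continuous_apply i).comp continuous_snd)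
  set K : Set ((Fin m → ℝ) × (Fin m → (Fin n → ℝ))) :=
    (stdSimplex ℝ (Fin m)) ×ˢ (Set.pi Set.univ fun _ => s) with hK
  have hKc : IsCompact K :=
    (isCompact_stdSimplex _ _).prod (isCompact_univ_pi fun _ => hs)
  have himg : φ '' K = convexHull ℝ s := by
    apply Subset.antisymm
    · rintro _ ⟨⟨w, f⟩, ⟨hw, hf⟩, rfl⟩
      have := Finset.centerMass_mem_convexHull (Finset.univ)
        (fun i _ => hw.1 i) (by rw [hw.2]; norm_num)
        (fun i _ => hf i (mem_univ i))
      rwa [Finset.centerMass_eq_of_sum_1 _ _ hw.2] at this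
    · intro x hx
      obtain ⟨ι, hι, z, w, hzs, haff, hwpos, hwsum, hx⟩ :=
        eq_pos_convex_span_of_mem_convexHull hx
      have hne : Nonempty ι := by
        by_contra h
        rw [not_nonempty_iff] at h
        rw [Finset.univ_eq_empty, Finset.sum_empty] at hwsum
        norm_num at hwsum
      obtain ⟨i0⟩ := hne
      have hcard : Fintype.card ι ≤ m := by
        calc Fintype.card ι ≤ Module.finrank ℝ (vectorSpan ℝ (Set.range z)) + 1 :=
              haff.card_le_finrank_succ
          _ ≤ Module.finrank ℝ (Fin n → ℝ) + 1 :=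
              Nat.add_le_add_right (Submodule.finrank_le _) 1
          _ = m := by simp [hm]
      set c := Fintype.card ι with hc
      let e : ι ≃ Fin c := Fintype.equivFin ι
      set W : Fin m → ℝ :=
        fun j => if h : (j : ℕ) < c then w (e.symm ⟨(j : ℕ), h⟩) else 0 with hW
      set F : Fin m → (Fin n → ℝ) :=
        fun j => if h : (j : ℕ) < c then z (e.symm ⟨(j : ℕ), h⟩) else z i0 with hF
      refine ⟨⟨W, F⟩, ⟨⟨fun j => ?_, ?_⟩, fun j _ => ?_⟩, ?_⟩
      · dsimp only [W]; split
        · exact (hwpos _).le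
        · exact le_rfl
      · rw [hW, pad_sum e hcard w, hwsum]
      · dsimp only [F]; split
        · exact hzs (mem_range_self _)
        · exact hzs (mem_range_self _)
      · show ∑ j, W j • F j = x
        have : ∀ j : Fin m, W j • F j
            = (if h : (j : ℕ) < c then (fun i => w i • z i) (e.symm ⟨(j : ℕ), h⟩) else 0) := by
          intro j
          dsimp only [W, F]
          split
          · rfl
          · simp
        rw [Finset.sum_congr rfl fun j _ => this j,
          pad_sum e hcard (fun i => w i • z i), hx]
  rw [← himg]
  exact hKc.image hcont

/-- Balas's condition for a basic step to be ineffective.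
`T_L = clconv(F₁ ∩ F₂)` equals `T_R = clconv(F₁) ∩ clconv(F₂)` iff every extreme
point of `T_R` is an extreme point of `C_{1p} ∩ C_{2q}` for some `(p,q)`. -/
theorem stmt_0 (n : ℕ) (hn : 1 ≤ n)
    (D1 D2 : Type) [Fintype D1] [Fintype D2] [Nonempty D1] [Nonempty D2]
    (C1 : D1 → Set (Fin n → ℝ)) (C2 : D2 → Set (Fin n → ℝ))
    (hC1 : ∀ i, IsCompact (C1 i) ∧ Convex ℝ (C1 i))
    (hC2 : ∀ j, IsCompact (C2 j) ∧ Convex ℝ (C2 j)) :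
    closure (convexHull ℝ ((⋃ i, C1 i) ∩ (⋃ j, C2 j)))
      = closure (convexHull ℝ (⋃ i, C1 i)) ∩ closure (convexHull ℝ (⋃ j, C2 j))
    ↔ ∀ x ∈ Set.extremePoints ℝ
        (closure (convexHull ℝ (⋃ i, C1 i)) ∩ closure (convexHull ℝ (⋃ j, C2 j))),
        ∃ p q, x ∈ Set.extremePoints ℝ (C1 p ∩ C2 q) := by
  set F1 := ⋃ i, C1 i with hF1
  set F2 := ⋃ j, C2 j with hF2
  have hF1c : IsCompact F1 := isCompact_iUnion fun i => (hC1 i).1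
  have hF2c : IsCompact F2 := isCompact_iUnion fun j => (hC2 j).1
  have hFic : IsCompact (F1 ∩ F2) := hF1c.inter_right hF2c.isClosed
  have hA : IsCompact (convexHull ℝ F1) := isCompact_convexHull_of_isCompact hF1c
  have hB : IsCompact (convexHull ℝ F2) := isCompact_convexHull_of_isCompact hF2c
  have hL : IsCompact (convexHull ℝ (F1 ∩ F2)) := isCompact_convexHull_of_isCompact hFic
  rw [hA.isClosed.closure_eq, hB.isClosed.closure_eq, hL.isClosed.closure_eq]
  set A := convexHull ℝ F1
  set B := convexHull ℝ F2
  set L := convexHull ℝ (F1 ∩ F2) with hLdef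
  have hsub : ∀ p q, C1 p ∩ C2 q ⊆ A ∩ B := fun p q =>
    Set.inter_subset_inter
      ((Set.subset_iUnion C1 p).trans (subset_convexHull ℝ F1))
      ((Set.subset_iUnion C2 q).trans (subset_convexHull ℝ F2))
  constructor
  · intro h x hx
    have hxL : x ∈ Set.extremePoints ℝ L := by rw [h]; exact hx
    have hxF : x ∈ F1 ∩ F2 := extremePoints_convexHull_subset hxL
    obtain ⟨⟨s1, ⟨p, rfl⟩, hp⟩, ⟨s2, ⟨q, rfl⟩, hq⟩⟩ := hxF
    exact ⟨p, q, inter_extremePoints_subset_extremePoints_of_subset (hsub p q)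
      ⟨⟨hp, hq⟩, hx⟩⟩
  · intro h
    apply Set.Subset.antisymm
    · exact Set.subset_inter (convexHull_mono Set.inter_subset_left)
        (convexHull_mono Set.inter_subset_right)
    · have hconv : Convex ℝ (A ∩ B) :=
        (convex_convexHull ℝ F1).inter (convex_convexHull ℝ F2)
      have hcomp : IsCompact (A ∩ B) := hA.inter_right hB.isClosed
      have hEP : Set.extremePoints ℝ (A ∩ B) ⊆ F1 ∩ F2 := by
        intro x hx
        obtain ⟨p, q, hpq⟩ := h x hx
        exact ⟨Set.mem_iUnion.2 ⟨p, hpq.1.1⟩, Set.mem_iUnion.2 ⟨q, hpq.1.2⟩⟩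
      calc A ∩ B = closure (convexHull ℝ (Set.extremePoints ℝ (A ∩ B))) :=
            (closure_convexHull_extremePoints hcomp hconv).symm
        _ ⊆ closure L := closure_mono
            (convexHull_mono hEP)
        _ = L := hL.isClosed.closure_eq
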